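/- If a group G has a cyclic normal subgroup T such that the quotient G/T is metacyclic, then every subgroup of G can be generated by at most 3 elements. -/

import Mathlib

/-- A group is metacyclic if it has a cyclic normal subgroup with cyclic quotient. -/
def IsMetacyclic (G : Type*) [Group G] : Prop :=
  ∃ (N : Subgroup G) (_ : N.Normal), IsCyclic N ∧ IsCyclic (G ⧸ N)

lemma isCyclic_of_injective' {A B : Type*} [Group A] [Group B] [IsCyclic B]
    (f : A →* B) (hf : Function.Injective f) : IsCyclic A := by
  let e := MonoidHom.ofInjective hf
  exact isCyclic_of_surjective (e.symm : f.range →* A) e.symm.surjective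

/-- one-step generation lemma -/
lemma gen_step {H : Type*} [Group H] (M : Subgroup H) (hMn : M.Normal) (n : ℕ)
    (hM : ∃ S : Finset H, S.card ≤ n ∧ Subgroup.closure (S : Set H) = M)
    (hQc : IsCyclic (H ⧸ M)) :
    ∃ S : Finset H, S.card ≤ n + 1 ∧ Subgroup.closure (S : Set H) = ⊤ := by
  classical
  obtain ⟨S, hScard, hSM⟩ := hM
  obtain ⟨g, hg⟩ := hQc.exists_generator
  obtain ⟨x, rfl⟩ := QuotientGroup.mk_surjective g
  refine ⟨insert x S, ?_, ?_⟩
  · exact (Finset.card_insert_le _ _).trans (Nat.add_le_add_right hScard 1)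
  · rw [eq_top_iff]
    intro h _
    obtain ⟨k, hk⟩ := hg (QuotientGroup.mk h)
    have hk' : QuotientGroup.mk (x ^ k) = (QuotientGroup.mk h : H ⧸ M) := by
      simpa using hk
    have hmem : (x ^ k)⁻¹ * h ∈ M := by
      rwa [QuotientGroup.eq] at hk'
    have hx : x ∈ Subgroup.closure ((insert x S : Finset H) : Set H) :=
      Subgroup.subset_closure (by simp)
    have hMle : M ≤ Subgroup.closure ((insert x S : Finset H) : Set H) := by
      rw [← hSM]
      exact Subgroup.closure_mono (by simp [Finset.coe_insert, Set.subset_insert])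
    have : h = x ^ k * ((x ^ k)⁻¹ * h) := by group
    rw [this]
    exact Subgroup.mul_mem _ (Subgroup.zpow_mem _ hx k) (hMle hmem)

/-- transfer generators of a subgroup (as a group) to the ambient group -/
lemma gen_of_subgroup {H : Type*} [Group H] (K : Subgroup H) (n : ℕ)
    (h : ∃ S : Finset K, S.card ≤ n ∧ Subgroup.closure (S : Set K) = ⊤) :
    ∃ S : Finset H, S.card ≤ n ∧ Subgroup.closure (S : Set H) = K := by
  classical
  obtain ⟨S, hScard, hStop⟩ := h
  refine ⟨S.image K.subtype, (Finset.card_image_le).trans hScard, ?_⟩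
  rw [Finset.coe_image, ← MonoidHom.map_closure, hStop, ← MonoidHom.range_eq_map,
    Subgroup.range_subtype]

theorem rank_le_three_of_cyclic_by_metacyclic {G : Type*} [Group G]
    (T : Subgroup G) (hTn : T.Normal) (hTc : IsCyclic T)
    (hQ : IsMetacyclic (G ⧸ T)) (H : Subgroup G) :
    ∃ S : Finset H, S.card ≤ 3 ∧ Subgroup.closure (S : Set H) = ⊤ := by
  classical
  obtain ⟨N, hNn, hNc, hNq⟩ := hQ
  -- the preimage of N in G
  set N' : Subgroup G := N.comap (QuotientGroup.mk' T) with hN'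
  have hN'n : N'.Normal := hNn.comap _
  have hTN' : T ≤ N' := by
    intro t ht
    show QuotientGroup.mk' T t ∈ N
    have : QuotientGroup.mk' T t = 1 := (QuotientGroup.eq_one_iff t).mpr ht
    rw [this]; exact N.one_mem
  set M1 : Subgroup H := T.subgroupOf H with hM1
  set M2 : Subgroup H := N'.subgroupOf H with hM2
  have hM1n : M1.Normal := hTn.subgroupOf H
  have hM2n : M2.Normal := hN'n.subgroupOf H
  have hM1le : M1 ≤ M2 := Subgroup.comap_mono hTN'
  -- M1 is cyclic
  have hM1c : IsCyclic M1 := by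
    refine isCyclic_of_injective'
      ((H.subtype.comp M1.subtype).codRestrict T fun x => Subgroup.mem_subgroupOf.mp x.2) ?_
    intro a b hab
    have hab' := congrArg (fun y : T => (y : G)) hab
    exact (H.subtype_injective.comp M1.subtype_injective) hab'
  -- P = M1 viewed inside M2
  set P : Subgroup M2 := M1.subgroupOf M2 with hP
  have hPn : P.Normal := hM1n.subgroupOf M2
  have hPc : IsCyclic P := by
    refine isCyclic_of_injective' (Subgroup.subgroupOfEquivOfLe hM1le).toMonoidHom ?_
    exact (Subgroup.subgroupOfEquivOfLe hM1le).injective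
  -- quotient M2 / P is cyclic via the map to N
  have hQP : IsCyclic (M2 ⧸ P) := by
    haveI := hPn
    set φ : M2 →* N :=
      ((QuotientGroup.mk' T).comp (H.subtype.comp M2.subtype)).codRestrict N
        (fun x => x.2) with hφ
    have hker : φ.ker = P := by
      ext x
      simp only [hφ, MonoidHom.mem_ker, MonoidHom.codRestrict_apply, hP]
      rw [Subgroup.mem_subgroupOf, Subgroup.mem_subgroupOf]
      constructor
      · intro h
        have : QuotientGroup.mk' T ((x : H) : G) = 1 := congrArg Subtype.val h
        exact (QuotientGroup.eq_one_iff _).mp this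
      · intro h
        ext
        exact (QuotientGroup.eq_one_iff _).mpr h
    have e := QuotientGroup.quotientKerEquivRange φ
    haveI : IsCyclic φ.range := Subgroup.isCyclic _
    have e2 := QuotientGroup.quotientMulEquivOfEq hker
    exact isCyclic_of_surjective ((e2.toMonoidHom).comp (e.symm : φ.range →* M2 ⧸ φ.ker))
      (e2.surjective.comp e.symm.surjective)
  -- quotient H / M2 is cyclic via the map to (G/T)/N
  have hQM2 : IsCyclic (H ⧸ M2) := by
    haveI := hM2n
    set ψ : H →* (G ⧸ T) ⧸ N :=
      (QuotientGroup.mk' N).comp ((QuotientGroup.mk' T).comp H.subtype) with hψ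
    have hker : ψ.ker = M2 := by
      ext x
      simp only [hψ, MonoidHom.mem_ker, MonoidHom.comp_apply, hM2]
      rw [Subgroup.mem_subgroupOf]
      rw [← MonoidHom.mem_ker, QuotientGroup.ker_mk']
      rfl
    have e := QuotientGroup.quotientKerEquivRange ψ
    haveI : IsCyclic ψ.range := Subgroup.isCyclic _
    have e2 := QuotientGroup.quotientMulEquivOfEq hker
    exact isCyclic_of_surjective ((e2.toMonoidHom).comp (e.symm : ψ.range →* H ⧸ ψ.ker))
      (e2.surjective.comp e.symm.surjective)
  -- assemble
  have g1 : ∃ S : Finset P, S.card ≤ 1 ∧ Subgroup.closure (S : Set P) = ⊤ := by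
    obtain ⟨g, hg⟩ := hPc.exists_generator
    refine ⟨{g}, by simp, ?_⟩
    rw [eq_top_iff]
    intro x _
    obtain ⟨k, hk⟩ := hg x
    rw [← hk]
    exact Subgroup.zpow_mem _ (Subgroup.subset_closure (by simp)) k
  have g1' : ∃ S : Finset M2, S.card ≤ 1 ∧ Subgroup.closure (S : Set M2) = P :=
    gen_of_subgroup P 1 g1
  have g2 : ∃ S : Finset M2, S.card ≤ 2 ∧ Subgroup.closure (S : Set M2) = ⊤ :=
    gen_step P hPn 1 g1' hQP
  have g2' : ∃ S : Finset H, S.card ≤ 2 ∧ Subgroup.closure (S : Set H) = M2 :=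
    gen_of_subgroup M2 2 g2
  exact gen_step M2 hM2n 2 g2' hQM2
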